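/- Let k be a field of characteristic 0 and let u ∈ ℤ^d. Inside the polynomial ring k[θ_1,…,θ_d], the set of polynomials f such that f(p) = 0 for every p ∈ C ∩ ℤ^d with p + u ∉ C ∩ ℤ^d is an ideal, and it equals the principal ideal generated by ∏_{σ ∈ ℱ : F_σ(u) < 0} ∏_{j=0}^{−F_σ(u)−1} (F_σ(θ) − j), where F_σ(θ) denotes the linear polynomial Σ_i c_{σ,i} θ_i whose integer coefficients c_{σ,i} are those of the functional F_σ. (This describes the ℤ^d-graded piece of degree u of the ring of differential operators D_A of the normal semigroup ring k[C ∩ ℤ^d].) -/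

import Mathlib

open Pointwise

/-- The real vector in `ℝ^d` obtained from an integer lattice point. -/
def castR {d : ℕ} (v : Fin d → ℤ) : Fin d → ℝ := fun i => (v i : ℝ)

/-- The cone `C = {p ∈ ℝ^d : F_σ(p) ≥ 0 for all σ ∈ ℱ}`. -/
def coneC {d : ℕ} {ℱ : Type} (Fσ : ℱ → ((Fin d → ℝ) →ₗ[ℝ] ℝ)) : Set (Fin d → ℝ) :=
  {p | ∀ σ, 0 ≤ Fσ σ p}

/-- The linear map `F : ℝ^d → ℝ^ℱ`, `F(p) = (F_σ(p))_σ`. -/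
noncomputable def Fmap {d : ℕ} {ℱ : Type} (Fσ : ℱ → ((Fin d → ℝ) →ₗ[ℝ] ℝ)) :
    (Fin d → ℝ) →ₗ[ℝ] (ℱ → ℝ) :=
  LinearMap.pi Fσ

/-- The linear polynomial `F_σ(θ) = Σ_i c_{σ,i} θ_i ∈ k[θ_1,…,θ_d]` with integer
coefficients `c_{σ,i}`. -/
noncomputable def Fpoly {d : ℕ} (k : Type) [Field k] (c : Fin d → ℤ) :
    MvPolynomial (Fin d) k :=
  ∑ i, MvPolynomial.C ((c i : ℤ) : k) * MvPolynomial.X i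

open MvPolynomial



lemma aux_prod_dvd {R : Type*} [CommMonoidWithZero R] [IsCancelMulZero R] {ι : Type*} [DecidableEq ι]
    (s : Finset ι) (φ : ι → R) (z : R)
    (hp : ∀ i ∈ s, Prime (φ i))
    (hna : ∀ i ∈ s, ∀ j ∈ s, i ≠ j → ¬ Associated (φ i) (φ j))
    (hd : ∀ i ∈ s, φ i ∣ z) : (∏ i ∈ s, φ i) ∣ z := by
  induction s using Finset.induction with
  | empty => simpa using one_dvd z
  | @insert a s ha ih =>
    rw [Finset.prod_insert ha]
    have hz := hd a (Finset.mem_insert_self a s)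
    have hps : (∏ i ∈ s, φ i) ∣ z :=
      ih (fun i hi => hp i (Finset.mem_insert_of_mem hi))
        (fun i hi j hj hij =>
          hna i (Finset.mem_insert_of_mem hi) j (Finset.mem_insert_of_mem hj) hij)
        (fun i hi => hd i (Finset.mem_insert_of_mem hi))
    obtain ⟨g, rfl⟩ := hps
    have hpa : Prime (φ a) := hp a (Finset.mem_insert_self a s)
    have hag : φ a ∣ g := by
      rcases hpa.dvd_or_dvd hz with h | h
      · obtain ⟨i, hi, hdvd⟩ := (hpa.dvd_finset_prod_iff φ).mp h
        exact absurd (hpa.associated_of_dvd (hp i (Finset.mem_insert_of_mem hi)) hdvd)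
          (hna a (Finset.mem_insert_self a s) i (Finset.mem_insert_of_mem hi)
            (fun he => ha (he ▸ hi)))
      · exact h
    obtain ⟨g', rfl⟩ := hag
    exact ⟨g', by rw [mul_left_comm, mul_assoc]⟩

lemma aux_eval_int_zero {k : Type*} [Field k] [CharZero k] :
    ∀ (n : ℕ) (g : MvPolynomial (Fin n) k),
      (∀ a : Fin n → ℤ, MvPolynomial.eval (fun i => ((a i : ℤ) : k)) g = 0) → g = 0 := by
  intro n
  induction n with
  | zero =>
    intro g h
    obtain ⟨c, rfl⟩ := MvPolynomial.C_surjective (Fin 0) g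
    have := h 0
    rw [MvPolynomial.eval_C] at this
    rw [this, map_zero]
  | succ n ih =>
    intro g h
    have hG : ∀ m, (MvPolynomial.finSuccEquiv k n g).coeff m = 0 := by
      intro m
      apply ih
      intro a
      have hQ : Polynomial.map (MvPolynomial.eval fun i => ((a i : ℤ) : k))
          (MvPolynomial.finSuccEquiv k n g) = 0 := by
        apply Polynomial.eq_zero_of_infinite_isRoot
        apply Set.Infinite.mono (s := Set.range (fun t : ℤ => (t : k)))
        · rintro x ⟨t, rfl⟩
          show Polynomial.IsRoot _ ((t : ℤ) : k)
          have h2 : MvPolynomial.eval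
              (Fin.cons ((t : ℤ) : k) (fun i => ((a i : ℤ) : k))) g = 0 := by
            have harg : (fun i : Fin (n + 1) => (((Fin.cons t a : Fin (n + 1) → ℤ) i : ℤ) : k)) =
                Fin.cons ((t : ℤ) : k) (fun i => ((a i : ℤ) : k)) := by
              funext i; refine Fin.cases ?_ ?_ i <;> simp
            rw [← h (Fin.cons t a), harg]
          rw [MvPolynomial.eval_eq_eval_mv_eval'] at h2
          exact h2
        · exact Set.infinite_range_of_injective (fun x y hxy => by exact_mod_cast hxy)
      have := congrArg (fun P => Polynomial.coeff P m) hQ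
      simpa [Polynomial.coeff_map] using this
    have : MvPolynomial.finSuccEquiv k n g = 0 := Polynomial.ext fun m => by simp [hG m]
    have := congrArg (MvPolynomial.finSuccEquiv k n).symm this
    simpa using this



/-- integer dot product -/
def dotZ {d : ℕ} (c v : Fin d → ℤ) : ℤ := ∑ i, c i * v i

/-- The substitution `X i ↦ X i + (j - F(θ)) w0 i`. -/
noncomputable def Ssub {d : ℕ} (k : Type) [Field k] (c w0 : Fin d → ℤ) (j : ℕ) :
    MvPolynomial (Fin d) k →ₐ[k] MvPolynomial (Fin d) k :=
  aeval (fun i => X i + (C (j : k) - Fpoly k c) * C ((w0 i : ℤ) : k))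

lemma eval_Fpoly {d : ℕ} {k : Type} [Field k] (c : Fin d → ℤ) (x : Fin d → k) :
    eval x (Fpoly k c) = ∑ i, (c i : k) * x i := by
  simp [Fpoly]

lemma eval_Fpoly_int {d : ℕ} {k : Type} [Field k] (c : Fin d → ℤ) (a : Fin d → ℤ) :
    eval (fun i => ((a i : ℤ) : k)) (Fpoly k c) = ((dotZ c a : ℤ) : k) := by
  rw [eval_Fpoly, dotZ]
  push_cast
  rfl

lemma Ssub_Fpoly {d : ℕ} {k : Type} [Field k] (c w0 : Fin d → ℤ) (j : ℕ)
    (hw0 : dotZ c w0 = 1) :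
    Ssub k c w0 j (Fpoly k c) = C (j : k) := by
  have h1 : (∑ i, C ((c i : ℤ) : k) * C ((w0 i : ℤ) : k) : MvPolynomial (Fin d) k) = 1 := by
    have : (∑ i, C ((c i : ℤ) : k) * C ((w0 i : ℤ) : k) : MvPolynomial (Fin d) k)
        = C ((dotZ c w0 : ℤ) : k) := by
      rw [dotZ]
      push_cast
      rw [map_sum]
      exact Finset.sum_congr rfl fun i _ => by rw [map_mul]
    rw [this, hw0]
    simp
  rw [Ssub]
  set g := fun i => X i + (C (j : k) - Fpoly k c) * C ((w0 i : ℤ) : k) with hg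
  have h2 : (aeval g) (Fpoly k c) = ∑ i, C ((c i : ℤ) : k) * g i := by
    rw [Fpoly, map_sum]
    refine Finset.sum_congr rfl fun i _ => ?_
    rw [map_mul, aeval_C, aeval_X, algebraMap_eq]
  have h4 : ∀ (T : MvPolynomial (Fin d) k) (i : Fin d),
      C ((c i : ℤ) : k) * (X i + T * C ((w0 i : ℤ) : k))
        = C ((c i : ℤ) : k) * X i + T * (C ((c i : ℤ) : k) * C ((w0 i : ℤ) : k)) :=
    fun T i => by ring
  have h5 : ∑ i, C ((c i : ℤ) : k) * g i
      = ∑ i, (C ((c i : ℤ) : k) * X i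
          + (C (j : k) - Fpoly k c) * (C ((c i : ℤ) : k) * C ((w0 i : ℤ) : k))) := by
    refine Finset.sum_congr rfl fun i _ => ?_
    simp only [hg]
    exact h4 _ i
  rw [h2, h5, Finset.sum_add_distrib, ← Finset.mul_sum, h1, mul_one]
  show Fpoly k c + (C (j : k) - Fpoly k c) = C (j : k)
  ring

lemma mk_Ssub {d : ℕ} {k : Type} [Field k] (c w0 : Fin d → ℤ) (j : ℕ)
    (f : MvPolynomial (Fin d) k) :
    Ideal.Quotient.mk (Ideal.span {Fpoly k c - C (j : k)}) (Ssub k c w0 j f)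
      = Ideal.Quotient.mk (Ideal.span {Fpoly k c - C (j : k)}) f := by
  set I := Ideal.span {Fpoly k c - C (j : k)} with hI
  have h1 : (Ideal.Quotient.mkₐ k I) (Ssub k c w0 j f)
      = aeval (fun i => Ideal.Quotient.mkₐ k I (X i + (C (j : k) - Fpoly k c) * C ((w0 i : ℤ) : k))) f := by
    rw [Ssub, comp_aeval_apply]
  have h2 : (Ideal.Quotient.mkₐ k I) f
      = aeval (fun i => Ideal.Quotient.mkₐ k I (X i)) f := by
    conv_lhs => rw [show f = aeval X f by rw [aeval_X_left]; rfl]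
    rw [comp_aeval_apply]
  have h3 : ∀ i : Fin d, Ideal.Quotient.mkₐ k I (X i + (C (j : k) - Fpoly k c) * C ((w0 i : ℤ) : k))
      = Ideal.Quotient.mkₐ k I (X i) := by
    intro i
    have ht : ((C (j : k) - Fpoly k c) * C ((w0 i : ℤ) : k)) ∈ I := by
      have hneg : (C (j : k) - Fpoly k c : MvPolynomial (Fin d) k)
          = -(Fpoly k c - C (j : k)) := by ring
      rw [hneg, neg_mul]
      exact I.neg_mem (Ideal.mul_mem_right _ _ (Ideal.subset_span (Set.mem_singleton _)))
    rw [map_add, Ideal.Quotient.mkₐ_eq_mk, Ideal.Quotient.eq_zero_iff_mem.mpr ht, add_zero]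
  have hfinal : (Ideal.Quotient.mkₐ k I) (Ssub k c w0 j f) = (Ideal.Quotient.mkₐ k I) f := by
    rw [h1, h2]
    exact congrArg (fun g => aeval g f) (funext h3)
  simpa [Ideal.Quotient.mkₐ_eq_mk] using hfinal

lemma Ssub_zero_dvd {d : ℕ} {k : Type} [Field k] (c w0 : Fin d → ℤ) (j : ℕ)
    (f : MvPolynomial (Fin d) k) (h : Ssub k c w0 j f = 0) :
    (Fpoly k c - C (j : k)) ∣ f := by
  rw [← Ideal.mem_span_singleton]
  rw [← Ideal.Quotient.eq_zero_iff_mem, ← mk_Ssub c w0 j f, h, map_zero]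

lemma dvd_Ssub_zero {d : ℕ} {k : Type} [Field k] (c w0 : Fin d → ℤ) (j : ℕ)
    (hw0 : dotZ c w0 = 1) (f : MvPolynomial (Fin d) k)
    (h : (Fpoly k c - C (j : k)) ∣ f) : Ssub k c w0 j f = 0 := by
  obtain ⟨g, rfl⟩ := h
  rw [map_mul, map_sub, Ssub_Fpoly c w0 j hw0]
  have hC : (Ssub k c w0 j) (C (j : k)) = C (j : k) := by
    rw [Ssub, aeval_C, algebraMap_eq]
  rw [hC, sub_self, zero_mul]

lemma ker_Ssub {d : ℕ} {k : Type} [Field k] (c w0 : Fin d → ℤ) (j : ℕ)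
    (hw0 : dotZ c w0 = 1) :
    RingHom.ker (Ssub k c w0 j).toRingHom = Ideal.span {Fpoly k c - C (j : k)} := by
  ext f
  rw [RingHom.mem_ker, Ideal.mem_span_singleton]
  constructor
  · intro h
    exact Ssub_zero_dvd c w0 j f h
  · intro h
    exact dvd_Ssub_zero c w0 j hw0 f h

lemma Fpoly_sub_ne_zero {d : ℕ} {k : Type} [Field k] [CharZero k] (c w0 : Fin d → ℤ) (j : ℕ)
    (hw0 : dotZ c w0 = 1) : Fpoly k c - C (j : k) ≠ 0 := by
  intro h0
  have := congrArg (eval (fun i => ((((j : ℤ) + 1) * w0 i : ℤ) : k))) h0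
  rw [map_sub, eval_C, eval_Fpoly_int, map_zero] at this
  have hdot : dotZ c (fun i => ((j : ℤ) + 1) * w0 i) = (j : ℤ) + 1 := by
    rw [dotZ]
    have : ∀ i ∈ Finset.univ, c i * (((j : ℤ) + 1) * w0 i) = ((j : ℤ) + 1) * (c i * w0 i) := by
      intro i _; ring
    rw [Finset.sum_congr rfl this, ← Finset.mul_sum, ← dotZ, hw0, mul_one]
  rw [hdot] at this
  have : ((j : ℤ) + 1 : ℤ) = ((j : ℤ) : ℤ) := by
    push_cast at this ⊢
    exact_mod_cast sub_eq_zero.mp this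
  omega

lemma prime_factor {d : ℕ} {k : Type} [Field k] [CharZero k] (c w0 : Fin d → ℤ) (j : ℕ)
    (hw0 : dotZ c w0 = 1) : Prime (Fpoly k c - C (j : k)) := by
  rw [← Ideal.span_singleton_prime (Fpoly_sub_ne_zero c w0 j hw0)]
  rw [← Ideal.Quotient.isDomain_iff_prime]
  rw [← ker_Ssub c w0 j hw0]
  have e := RingHom.quotientKerEquivRange (Ssub k c w0 j).toRingHom
  exact Function.Injective.isDomain e.toRingHom e.injective

lemma eval_Ssub {d : ℕ} {k : Type} [Field k] (c w0 : Fin d → ℤ) (j : ℕ)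
    (f : MvPolynomial (Fin d) k) (a : Fin d → ℤ) :
    eval (fun i => ((a i : ℤ) : k)) (Ssub k c w0 j f)
      = eval (fun i => ((a i + ((j : ℤ) - dotZ c a) * w0 i : ℤ) : k)) f := by
  rw [Ssub, map_aeval]
  have h1 : (eval fun i => ((a i : ℤ) : k)).comp (algebraMap k (MvPolynomial (Fin d) k))
      = RingHom.id k := RingHom.ext fun r => by simp [algebraMap_eq]
  rw [h1]
  have h2 : (fun i => (eval fun i' => ((a i' : ℤ) : k))
      (X i + (C (j : k) - Fpoly k c) * C ((w0 i : ℤ) : k)))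
      = fun i => ((a i + ((j : ℤ) - dotZ c a) * w0 i : ℤ) : k) := by
    funext i
    rw [map_add, eval_X, map_mul, map_sub, eval_C, eval_C, eval_Fpoly_int]
    push_cast
    ring
  rw [h2]
  rfl

lemma key_dvd {d : ℕ} {k : Type} [Field k] [CharZero k] (c w0 a0 : Fin d → ℤ)
    (hw0 : dotZ c w0 = 1) (j : ℕ)
    (f : MvPolynomial (Fin d) k)
    (hvan : ∀ x : Fin d → ℤ, dotZ c x = (j : ℤ) →
      ∃ N : ℕ, ∀ s : ℕ, N ≤ s →
        eval (fun i => ((x i + (s : ℤ) * a0 i : ℤ) : k)) f = 0) :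
    (Fpoly k c - C (j : k)) ∣ f := by
  apply Ssub_zero_dvd c w0 j
  apply aux_eval_int_zero d
  intro a
  rw [eval_Ssub]
  set x : Fin d → ℤ := fun i => a i + ((j : ℤ) - dotZ c a) * w0 i with hx
  show eval (fun i => ((x i : ℤ) : k)) f = 0
  have hxj : dotZ c x = (j : ℤ) := by
    show ∑ i, c i * (a i + ((j : ℤ) - dotZ c a) * w0 i) = (j : ℤ)
    have hc : ∀ i ∈ Finset.univ, c i * (a i + ((j : ℤ) - dotZ c a) * w0 i)
        = c i * a i + ((j : ℤ) - dotZ c a) * (c i * w0 i) := fun i _ => by ring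
    rw [Finset.sum_congr rfl hc, Finset.sum_add_distrib, ← Finset.mul_sum]
    rw [show (∑ i, c i * w0 i) = dotZ c w0 from rfl, hw0,
      show (∑ i, c i * a i) = dotZ c a from rfl]
    ring
  obtain ⟨N, hN⟩ := hvan x hxj
  set Q : Polynomial k := aeval (fun i => Polynomial.C ((x i : ℤ) : k)
      + Polynomial.C ((a0 i : ℤ) : k) * Polynomial.X) f with hQ
  have hQeval : ∀ t : k, Polynomial.eval t Q
      = eval (fun i => ((x i : ℤ) : k) + ((a0 i : ℤ) : k) * t) f := by
    intro t
    have hma := map_aeval (fun i => Polynomial.C ((x i : ℤ) : k)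
      + Polynomial.C ((a0 i : ℤ) : k) * Polynomial.X) (Polynomial.evalRingHom t) f
    have h1 : (Polynomial.evalRingHom t).comp (algebraMap k (Polynomial k)) = RingHom.id k :=
      RingHom.ext fun r => by simp
    rw [h1] at hma
    have h2 : (fun i => Polynomial.evalRingHom t (Polynomial.C ((x i : ℤ) : k)
        + Polynomial.C ((a0 i : ℤ) : k) * Polynomial.X))
        = fun i => ((x i : ℤ) : k) + ((a0 i : ℤ) : k) * t := by
      funext i; simp
    rw [h2] at hma
    exact hma
  have hQzero : Q = 0 := by
    apply Polynomial.eq_zero_of_infinite_isRoot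
    apply Set.Infinite.mono (s := (fun s : ℕ => ((s : ℕ) : k)) '' Set.Ici N)
    swap
    · apply Set.Infinite.image
      · intro s1 _ s2 _ h12
        exact Nat.cast_injective h12
      · exact Set.Ici_infinite N
    · rintro t ⟨s, hs, rfl⟩
      show Polynomial.IsRoot Q ((s : ℕ) : k)
      rw [Polynomial.IsRoot, hQeval]
      have harg2 : (fun i => ((x i : ℤ) : k) + ((a0 i : ℤ) : k) * ((s : ℕ) : k))
          = fun i => ((x i + (s : ℤ) * a0 i : ℤ) : k) := by
        funext i; push_cast; ring
      rw [harg2]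
      exact hN s hs
  have harg : (fun i => ((x i : ℤ) : k)) = fun i => ((x i : ℤ) : k) + ((a0 i : ℤ) : k) * 0 := by
    funext i; ring
  rw [harg, ← hQeval 0, hQzero, Polynomial.eval_zero]

lemma dotZ_add {d : ℕ} (c a b : Fin d → ℤ) :
    dotZ c (fun i => a i + b i) = dotZ c a + dotZ c b := by
  simp [dotZ, mul_add, Finset.sum_add_distrib]

lemma dotZ_mul {d : ℕ} (c : Fin d → ℤ) (n : ℤ) (a : Fin d → ℤ) :
    dotZ c (fun i => n * a i) = n * dotZ c a := by
  rw [dotZ, dotZ, Finset.mul_sum]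
  exact Finset.sum_congr rfl fun i _ => by ring

lemma dotZ_sub_mul {d : ℕ} (c a w : Fin d → ℤ) (m : ℤ) :
    dotZ c (fun i => a i - m * w i) = dotZ c a - m * dotZ c w := by
  rw [dotZ, dotZ, dotZ, Finset.mul_sum, ← Finset.sum_sub_distrib]
  exact Finset.sum_congr rfl fun i _ => by ring

lemma eval_unit_ne_zero {d : ℕ} {k : Type} [Field k]
    (u : (MvPolynomial (Fin d) k)ˣ) (pt : Fin d → k) :
    eval pt (u : MvPolynomial (Fin d) k) ≠ 0 :=
  (IsUnit.map (eval pt) u.isUnit).ne_zero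

lemma dot_eq_of_assoc {d : ℕ} {k : Type} [Field k] [CharZero k]
    (c1 c2 : Fin d → ℤ) (j1 j2 : ℕ)
    (h : Associated (Fpoly k c1 - C (j1 : k)) (Fpoly k c2 - C (j2 : k)))
    (a : Fin d → ℤ) (ha : dotZ c2 a = (j2 : ℤ)) : dotZ c1 a = (j1 : ℤ) := by
  obtain ⟨u, hu⟩ := h
  have := congrArg (eval (fun i => ((a i : ℤ) : k))) hu
  rw [map_mul, map_sub, map_sub, eval_C, eval_C, eval_Fpoly_int, eval_Fpoly_int, ha] at this
  have hne := eval_unit_ne_zero u (fun i => ((a i : ℤ) : k))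
  have hz : ((dotZ c1 a : ℤ) : k) - ((j1 : ℕ) : k) = 0 := by
    rcases mul_eq_zero.mp (by rw [this]; push_cast; ring) with h' | h'
    · exact h'
    · exact absurd h' hne
  have : ((dotZ c1 a : ℤ) : k) = ((j1 : ℤ) : k) := by
    rw [sub_eq_zero] at hz
    rw [hz]
    push_cast
    ring
  exact_mod_cast this

lemma notassoc_same {d : ℕ} {k : Type} [Field k] [CharZero k]
    (c w : Fin d → ℤ) (hw : dotZ c w = 1) (j1 j2 : ℕ) (hj : j1 ≠ j2) :
    ¬ Associated (Fpoly k c - C (j1 : k)) (Fpoly k c - C (j2 : k)) := by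
  intro h
  have h2 := dot_eq_of_assoc c c j1 j2 h (fun i => (j2 : ℤ) * w i)
    (by rw [dotZ_mul, hw, mul_one])
  rw [dotZ_mul, hw, mul_one] at h2
  exact hj (by exact_mod_cast h2.symm)

lemma assoc_consequence {d : ℕ} {k : Type} [Field k] [CharZero k]
    (c1 c2 w2 : Fin d → ℤ) (hw2 : dotZ c2 w2 = 1) (j1 j2 : ℕ)
    (h : Associated (Fpoly k c1 - C (j1 : k)) (Fpoly k c2 - C (j2 : k))) :
    ∀ v : Fin d → ℤ, dotZ c1 v = dotZ c1 w2 * dotZ c2 v := by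
  intro v
  have hbase : dotZ c1 (fun i => (j2 : ℤ) * w2 i) = (j1 : ℤ) :=
    dot_eq_of_assoc c1 c2 j1 j2 h _ (by rw [dotZ_mul, hw2, mul_one])
  have hshift : dotZ c1 (fun i => (j2 : ℤ) * w2 i + (v i - dotZ c2 v * w2 i)) = (j1 : ℤ) := by
    apply dot_eq_of_assoc c1 c2 j1 j2 h
    rw [dotZ_add, dotZ_mul, hw2]
    rw [dotZ_sub_mul, hw2]
    ring
  rw [dotZ_add, hbase] at hshift
  rw [dotZ_sub_mul] at hshift
  linear_combination hshift

lemma exists_a0 {d : ℕ} {ℱ : Type} [Fintype ℱ] (Fσ : ℱ → ((Fin d → ℝ) →ₗ[ℝ] ℝ))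
    (cσ : ℱ → Fin d → ℤ)
    (hcσ : ∀ σ (p : Fin d → ℝ), Fσ σ p = ∑ i, (cσ σ i : ℝ) * p i)
    (σ : ℱ) (w0 : Fin d → ℤ) (hw0 : dotZ (cσ σ) w0 = 1)
    (pσ : Fin d → ℝ) (hp0 : Fσ σ pσ = 0) (hppos : ∀ τ, τ ≠ σ → 0 < Fσ τ pσ) :
    ∃ a0 : Fin d → ℤ, dotZ (cσ σ) a0 = 0 ∧ ∀ τ, τ ≠ σ → 1 ≤ dotZ (cσ τ) a0 := by
  classical
  set lam : ℱ → Fin d → ℤ := fun τ i => cσ τ i - cσ σ i * dotZ (cσ τ) w0 with hlam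
  have hreal : ∀ τ, ∑ i, ((lam τ i : ℤ) : ℝ) * pσ i = Fσ τ pσ := by
    intro τ
    have h1 : ∑ i, ((lam τ i : ℤ) : ℝ) * pσ i
        = (∑ i, (cσ τ i : ℝ) * pσ i)
          - ((dotZ (cσ τ) w0 : ℤ) : ℝ) * ∑ i, (cσ σ i : ℝ) * pσ i := by
      rw [Finset.mul_sum, ← Finset.sum_sub_distrib]
      refine Finset.sum_congr rfl fun i _ => ?_
      simp only [hlam]
      push_cast
      ring
    rw [h1, ← hcσ, ← hcσ, hp0, mul_zero, sub_zero]
  set M : ℱ → ℝ := fun τ => ∑ i, |((lam τ i : ℤ) : ℝ)| with hM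
  have hM0 : ∀ τ, 0 ≤ M τ := fun τ => Finset.sum_nonneg fun i _ => abs_nonneg _
  obtain ⟨N, hN⟩ := exists_nat_gt
    (∑ τ ∈ Finset.univ.filter (· ≠ σ), (M τ + 1) / Fσ τ pσ)
  set b : Fin d → ℤ := fun i => ⌊(N : ℝ) * pσ i⌋ with hb
  refine ⟨fun i => b i - dotZ (cσ σ) b * w0 i, ?_, ?_⟩
  · rw [dotZ_sub_mul, hw0, mul_one, sub_self]
  · intro τ hτ
    rw [dotZ_sub_mul]
    have hcomb : dotZ (cσ τ) b - dotZ (cσ σ) b * dotZ (cσ τ) w0 = ∑ i, lam τ i * b i := by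
      rw [dotZ, dotZ, Finset.sum_mul, ← Finset.sum_sub_distrib]
      refine Finset.sum_congr rfl fun i _ => ?_
      simp only [hlam]
      ring
    have hsumreal : ((∑ i, lam τ i * b i : ℤ) : ℝ)
        = ∑ i, ((lam τ i : ℤ) : ℝ) * ((b i : ℤ) : ℝ) := by
      push_cast
      rfl
    have hterm : ∀ i : Fin d, ((lam τ i : ℤ) : ℝ) * ((N : ℝ) * pσ i)
        - |((lam τ i : ℤ) : ℝ)| ≤ ((lam τ i : ℤ) : ℝ) * ((b i : ℤ) : ℝ) := by
      intro i
      have hfl : ((b i : ℤ) : ℝ) = ((⌊(N : ℝ) * pσ i⌋ : ℤ) : ℝ) := rfl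
      rcases le_or_gt 0 (((lam τ i : ℤ) : ℝ)) with hl | hl
      · have h1 : (N : ℝ) * pσ i - 1 < ((⌊(N : ℝ) * pσ i⌋ : ℤ) : ℝ) :=
          Int.sub_one_lt_floor _
        have h2 := mul_le_mul_of_nonneg_left h1.le hl
        rw [abs_of_nonneg hl, hfl]
        nlinarith
      · have h1 : ((⌊(N : ℝ) * pσ i⌋ : ℤ) : ℝ) ≤ (N : ℝ) * pσ i := Int.floor_le _
        have h2 := mul_le_mul_of_nonpos_left h1 hl.le
        rw [abs_of_neg hl, hfl]
        linarith
    have hlow : (N : ℝ) * Fσ τ pσ - M τ ≤ ((∑ i, lam τ i * b i : ℤ) : ℝ) := by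
      rw [hsumreal]
      have hsum := Finset.sum_le_sum (fun i (_ : i ∈ Finset.univ) => hterm i)
      have hexp : ∑ i, (((lam τ i : ℤ) : ℝ) * ((N : ℝ) * pσ i) - |((lam τ i : ℤ) : ℝ)|)
          = (N : ℝ) * Fσ τ pσ - M τ := by
        have hA : ∑ i, ((lam τ i : ℤ) : ℝ) * ((N : ℝ) * pσ i)
            = (N : ℝ) * ∑ i, ((lam τ i : ℤ) : ℝ) * pσ i := by
          rw [Finset.mul_sum]
          exact Finset.sum_congr rfl fun i _ => by ring
        rw [Finset.sum_sub_distrib, hA, hreal τ]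
      rw [hexp] at hsum
      exact hsum
    have hNτ : M τ + 1 < (N : ℝ) * Fσ τ pσ := by
      have hmem : τ ∈ Finset.univ.filter (· ≠ σ) := by simp [hτ]
      have hle : (M τ + 1) / Fσ τ pσ
          ≤ ∑ τ' ∈ Finset.univ.filter (· ≠ σ), (M τ' + 1) / Fσ τ' pσ := by
        apply Finset.single_le_sum (f := fun τ' => (M τ' + 1) / Fσ τ' pσ) _ hmem
        intro τ' hτ'
        have hτ'ne : τ' ≠ σ := by simpa using hτ'
        exact div_nonneg (by linarith [hM0 τ']) (le_of_lt (hppos τ' hτ'ne))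
      have hlt := lt_of_le_of_lt hle hN
      rw [div_lt_iff₀ (hppos τ hτ)] at hlt
      linarith
    have hpos : (0 : ℝ) < ((∑ i, lam τ i * b i : ℤ) : ℝ) := by linarith [hM0 τ]
    have hint : 0 < ∑ i, lam τ i * b i := by exact_mod_cast hpos
    rw [hcomb]
    omega

lemma dotZ_add_mul {d : ℕ} (c x a0 : Fin d → ℤ) (s : ℤ) :
    dotZ c (fun i => x i + s * a0 i) = dotZ c x + s * dotZ c a0 := by
  rw [dotZ, dotZ, dotZ, Finset.mul_sum, ← Finset.sum_add_distrib]
  exact Finset.sum_congr rfl fun i _ => by ring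

lemma dotZ_pi_add {d : ℕ} (c p q : Fin d → ℤ) :
    dotZ c (p + q) = dotZ c p + dotZ c q := dotZ_add c p q

lemma dotZ_single {d : ℕ} (c : Fin d → ℤ) (i : Fin d) :
    dotZ c (fun l => if l = i then 1 else 0) = c i := by
  rw [dotZ]
  rw [Finset.sum_eq_single i]
  · simp
  · intro l _ hl
    simp [hl]
  · simp

theorem stmt14 (d : ℕ) (hd : 1 ≤ d) (ℱ : Type) [Fintype ℱ] [Nonempty ℱ]
    (Fσ : ℱ → ((Fin d → ℝ) →ₗ[ℝ] ℝ))
    (hFint : ∀ σ (v : Fin d → ℤ), ∃ z : ℤ, Fσ σ (castR v) = z)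
    (hFsurj : ∀ σ (z : ℤ), ∃ v : Fin d → ℤ, Fσ σ (castR v) = z)
    (hFinj : Function.Injective (Fmap Fσ))
    (hfull : (interior (coneC Fσ)).Nonempty)
    (hfacet : ∀ σ, ∃ pσ ∈ coneC Fσ, Fσ σ pσ = 0 ∧ ∀ τ, τ ≠ σ → 0 < Fσ τ pσ)
    (k : Type) [Field k] [CharZero k]
    (cσ : ℱ → Fin d → ℤ)
    (hcσ : ∀ σ (p : Fin d → ℝ), Fσ σ p = ∑ i, (cσ σ i : ℝ) * p i)
    (u : Fin d → ℤ) :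
    {f : MvPolynomial (Fin d) k |
        ∀ p : Fin d → ℤ, castR p ∈ coneC Fσ → castR (p + u) ∉ coneC Fσ →
          MvPolynomial.eval (fun i => ((p i : ℤ) : k)) f = 0} =
      ↑(Ideal.span
        {∏ σ ∈ Finset.univ.filter (fun σ => Fσ σ (castR u) < 0),
          ∏ j ∈ Finset.range ⌊-(Fσ σ (castR u))⌋₊,
            (Fpoly k (cσ σ) - MvPolynomial.C (j : k))}) := by
  classical
  have hFdot : ∀ τ (v : Fin d → ℤ), Fσ τ (castR v) = ((dotZ (cσ τ) v : ℤ) : ℝ) := by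
    intro τ v
    rw [hcσ, dotZ]
    push_cast
    rfl
  have hprim : ∀ τ : ℱ, ∃ w : Fin d → ℤ, dotZ (cσ τ) w = 1 := by
    intro τ
    obtain ⟨v, hv⟩ := hFsurj τ 1
    refine ⟨v, ?_⟩
    rw [hFdot] at hv
    exact_mod_cast hv
  have memC : ∀ v : Fin d → ℤ, castR v ∈ coneC Fσ ↔ ∀ τ, 0 ≤ dotZ (cσ τ) v := by
    intro v
    show (∀ τ, 0 ≤ Fσ τ (castR v)) ↔ _
    constructor
    · intro h τ
      have := h τ
      rw [hFdot] at this
      exact_mod_cast this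
    · intro h τ
      rw [hFdot]
      exact_mod_cast h τ
  have hrange : ∀ σ0 : ℱ, ⌊-(Fσ σ0 (castR u))⌋₊ = (-(dotZ (cσ σ0) u)).toNat := by
    intro σ0
    rw [hFdot, ← Int.cast_neg, ← Int.floor_toNat, Int.floor_intCast]
  have hfilt : ∀ σ0 : ℱ,
      (σ0 ∈ Finset.univ.filter (fun σ1 => Fσ σ1 (castR u) < 0)) ↔ dotZ (cσ σ0) u < 0 := by
    intro σ0
    rw [Finset.mem_filter]
    simp only [Finset.mem_univ, true_and]
    rw [hFdot]
    constructor <;> intro h <;> exact_mod_cast h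
  ext f
  simp only [Set.mem_setOf_eq, SetLike.mem_coe]
  rw [Ideal.mem_span_singleton]
  constructor
  · -- vanishing → divisible
    intro hf
    rw [Finset.prod_sigma']
    apply aux_prod_dvd
    · rintro ⟨σ1, j1⟩ _
      obtain ⟨w, hw⟩ := hprim σ1
      exact prime_factor (cσ σ1) w j1 hw
    · rintro ⟨σ1, j1⟩ _ ⟨σ2, j2⟩ _ hne
      by_cases hs : σ1 = σ2
      · subst hs
        have hj : j1 ≠ j2 := fun h => hne (by rw [h])
        obtain ⟨w, hw⟩ := hprim σ1
        exact notassoc_same (cσ σ1) w hw j1 j2 hj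
      · intro hassoc
        obtain ⟨w2, hw2⟩ := hprim σ2
        have hrel := assoc_consequence (cσ σ1) (cσ σ2) w2 hw2 j1 j2 hassoc
        have hcoef : ∀ i, cσ σ1 i = dotZ (cσ σ1) w2 * cσ σ2 i := by
          intro i
          have h1 := hrel (fun l => if l = i then 1 else 0)
          rwa [dotZ_single, dotZ_single] at h1
        obtain ⟨p2, _, hp20, hp2pos⟩ := hfacet σ2
        have hFrel : Fσ σ1 p2 = ((dotZ (cσ σ1) w2 : ℤ) : ℝ) * Fσ σ2 p2 := by
          rw [hcσ, hcσ, Finset.mul_sum]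
          refine Finset.sum_congr rfl fun i _ => ?_
          rw [hcoef i]
          push_cast
          ring
        have hpos := hp2pos σ1 hs
        rw [hFrel, hp20, mul_zero] at hpos
        exact lt_irrefl 0 hpos
    · rintro ⟨σ1, j1⟩ hmem
      rw [Finset.mem_sigma] at hmem
      obtain ⟨hmem1, hmem2⟩ := hmem
      have hzneg : dotZ (cσ σ1) u < 0 := (hfilt σ1).mp hmem1
      have hjlt : (j1 : ℤ) < -(dotZ (cσ σ1) u) := by
        rw [Finset.mem_range, hrange σ1] at hmem2
        have h5 : j1 < (-(dotZ (cσ σ1) u)).toNat := hmem2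
        omega
      obtain ⟨w, hw⟩ := hprim σ1
      obtain ⟨pσ1, _, hp10, hp1pos⟩ := hfacet σ1
      obtain ⟨a0, ha00, ha0pos⟩ := exists_a0 Fσ cσ hcσ σ1 w hw pσ1 hp10 hp1pos
      apply key_dvd (cσ σ1) w a0 hw j1 f
      intro x hx
      refine ⟨Finset.univ.sup (fun τ => (-(dotZ (cσ τ) x)).toNat), fun s hs => ?_⟩
      have hp : ∀ τ, 0 ≤ dotZ (cσ τ) (fun i => x i + (s : ℤ) * a0 i) := by
        intro τ
        rw [dotZ_add_mul]
        by_cases hτ : τ = σ1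
        · subst hτ
          rw [hx, ha00, mul_zero, add_zero]
          exact Int.natCast_nonneg j1
        · have h1 : 1 ≤ dotZ (cσ τ) a0 := ha0pos τ hτ
          have h2 : (-(dotZ (cσ τ) x)).toNat ≤ s :=
            le_trans (Finset.le_sup (f := fun τ => (-(dotZ (cσ τ) x)).toNat) (Finset.mem_univ τ)) hs
          have h3 : -(dotZ (cσ τ) x) ≤ (s : ℤ) :=
            le_trans (Int.self_le_toNat _) (by exact_mod_cast h2)
          have h4 : (0 : ℤ) ≤ (s : ℤ) := Int.natCast_nonneg s
          nlinarith
      have hnpz : dotZ (cσ σ1) ((fun i => x i + (s : ℤ) * a0 i) + u) < 0 := by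
        rw [dotZ_pi_add, dotZ_add_mul, hx, ha00, mul_zero, add_zero]
        omega
      apply hf (fun i => x i + (s : ℤ) * a0 i) ((memC _).mpr hp)
      intro hmemc
      have := (memC _).mp hmemc σ1
      omega
  · -- divisible → vanishing
    intro hdvd p hp hnp
    obtain ⟨g, rfl⟩ := hdvd
    rw [map_mul]
    have hnp' : ∃ σ0, Fσ σ0 (castR (p + u)) < 0 := by
      by_contra hcon
      push_neg at hcon
      exact hnp fun τ => hcon τ
    obtain ⟨σ0, hσ0⟩ := hnp'
    have hz : dotZ (cσ σ0) (p + u) < 0 := by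
      rw [hFdot] at hσ0
      exact_mod_cast hσ0
    have hppos := (memC p).mp hp σ0
    have hzadd : dotZ (cσ σ0) (p + u) = dotZ (cσ σ0) p + dotZ (cσ σ0) u :=
      dotZ_pi_add _ _ _
    have hzu : dotZ (cσ σ0) u < 0 := by omega
    have hprod : MvPolynomial.eval (fun i => ((p i : ℤ) : k))
        (∏ σ1 ∈ Finset.univ.filter (fun σ1 => Fσ σ1 (castR u) < 0),
          ∏ j ∈ Finset.range ⌊-(Fσ σ1 (castR u))⌋₊,
            (Fpoly k (cσ σ1) - MvPolynomial.C (j : k))) = 0 := by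
      rw [map_prod]
      apply Finset.prod_eq_zero ((hfilt σ0).mpr hzu)
      rw [map_prod]
      apply Finset.prod_eq_zero (i := (dotZ (cσ σ0) p).toNat)
      · rw [Finset.mem_range, hrange σ0]
        omega
      · have h1 : (((dotZ (cσ σ0) p).toNat : ℕ) : k) = ((dotZ (cσ σ0) p : ℤ) : k) := by
          rw [← Int.cast_natCast, Int.toNat_of_nonneg hppos]
        rw [map_sub, eval_C, eval_Fpoly_int, h1, sub_self]
    rw [hprod, zero_mul]
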